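/- Let Q be a connected Laplacian matrix on V = {0,…,n}. For every nonempty proper subset S ⊊ V, the point u_S = Σ_{i∈S} b_i is an extreme point of the polytope H'(G) = conv{u_T : ∅ ≠ T ⊆ V}; in fact there exists a linear functional f on ℝ^{n+1} such that f(u_S) > f(u_T) for every nonempty subset T ⊆ V with T ≠ S. -/

import Mathlib

open Finset

/-- A Laplacian matrix of a multigraph on vertex set `Fin (n+1)`:
symmetric, nonpositive off-diagonal entries, all row sums zero. -/
def IsLaplacian (n : ℕ) (Q : Matrix (Fin (n+1)) (Fin (n+1)) ℤ) : Prop :=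
  (∀ i j, Q i j = Q j i) ∧ (∀ i j, i ≠ j → Q i j ≤ 0) ∧ (∀ i, ∑ j, Q i j = 0)

/-- A connected Laplacian matrix: the graph with an edge `{i,j}` whenever
`b_{ij} = -Q i j > 0` is connected. -/
def IsConnectedLaplacian (n : ℕ) (Q : Matrix (Fin (n+1)) (Fin (n+1)) ℤ) : Prop :=
  IsLaplacian n Q ∧ (SimpleGraph.fromRel (fun i j => Q i j ≠ 0)).Connected

/-- The Laplacian lattice: the subgroup of `ℤ^{n+1}` generated by the rows of `Q`. -/
noncomputable def lapLattice (n : ℕ) (Q : Matrix (Fin (n+1)) (Fin (n+1)) ℤ) :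
    AddSubgroup (Fin (n+1) → ℤ) :=
  AddSubgroup.closure (Set.range fun i => Q i)

/-- The hyperplane `H_0 = {x ∈ ℝ^{n+1} : ∑ x i = 0}`. -/
def H0 (n : ℕ) : Set (Fin (n+1) → ℝ) := {x | ∑ i, x i = 0}

/-- The simplicial distance function on `H_0`: `d_△(p,q) = max_i (p i - q i)`. -/
noncomputable def simpDist (n : ℕ) (p q : Fin (n+1) → ℝ) : ℝ :=
  Finset.univ.sup' Finset.univ_nonempty fun i => p i - q i

/-- Coercion of an integer vector to a real vector. -/
noncomputable def intVec (n : ℕ) (q : Fin (n+1) → ℤ) : Fin (n+1) → ℝ := fun i => (q i : ℝ)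

/-- The root lattice `A_n = {x ∈ ℤ^{n+1} : ∑ x i = 0}`. -/
def rootLattice (n : ℕ) : AddSubgroup (Fin (n+1) → ℤ) where
  carrier := {x | ∑ i, x i = 0}
  add_mem' := by
    intro a b ha hb
    simp only [Set.mem_setOf_eq, Pi.add_apply, Finset.sum_add_distrib] at *
    omega
  zero_mem' := by simp
  neg_mem' := by
    intro a ha
    simp only [Set.mem_setOf_eq, Pi.neg_apply, Finset.sum_neg_distrib] at *
    omega

/-- The `i`-th row of `Q` as a real vector. -/
noncomputable def rowVec (n : ℕ) (Q : Matrix (Fin (n+1)) (Fin (n+1)) ℤ) (i : Fin (n+1)) :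
    Fin (n+1) → ℝ := fun j => (Q i j : ℝ)

/-- `u^σ_k = b_{σ(0)} + ⋯ + b_{σ(k)}`. -/
noncomputable def uPerm (n : ℕ) (Q : Matrix (Fin (n+1)) (Fin (n+1)) ℤ)
    (σ : Equiv.Perm (Fin (n+1))) (k : Fin (n+1)) : Fin (n+1) → ℝ :=
  ∑ j ∈ Finset.Iic k, rowVec n Q (σ j)

/-- The Delaunay polytope of the origin: the union over all permutations `σ`
of the simplices `△_σ = conv{u^σ_0, …, u^σ_n}`. -/
noncomputable def HDel (n : ℕ) (Q : Matrix (Fin (n+1)) (Fin (n+1)) ℤ) :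
    Set (Fin (n+1) → ℝ) :=
  ⋃ σ : Equiv.Perm (Fin (n+1)), convexHull ℝ (Set.range (uPerm n Q σ))

/-- `u_S = ∑_{i ∈ S} b_i`, as a real vector. -/
noncomputable def uCut (n : ℕ) (Q : Matrix (Fin (n+1)) (Fin (n+1)) ℤ)
    (S : Finset (Fin (n+1))) : Fin (n+1) → ℝ := ∑ i ∈ S, rowVec n Q i


lemma hull_extreme_of_strict_max {E : Type*} [AddCommGroup E] [Module ℝ E]
    (s : Finset E) (f : E →ₗ[ℝ] ℝ) (x : E) (hx : x ∈ s)
    (h : ∀ y ∈ s, y ≠ x → f y < f x) :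
    x ∈ Set.extremePoints ℝ (convexHull ℝ (s : Set E)) := by
  have hle : ∀ z ∈ convexHull ℝ (s : Set E), f z ≤ f x := by
    intro z hz
    refine convexHull_min ?_ (convex_halfSpace_le (𝕜 := ℝ) (E := E) (β := ℝ) (LinearMap.isLinear f) (f x)) hz
    intro y hy
    show f y ≤ f x
    rcases eq_or_ne y x with rfl | hne
    · exact le_rfl
    · exact (h y hy hne).le
  have heq : ∀ z ∈ convexHull ℝ (s : Set E), f z = f x → z = x := by
    intro z hz hfz
    rw [Finset.convexHull_eq] at hz
    obtain ⟨w, hw0, hw1, hwz⟩ := hz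
    rw [Finset.centerMass_eq_of_sum_1 _ _ hw1] at hwz
    by_cases hcase : ∀ y ∈ s, y ≠ x → w y = 0
    · have hwx : w x = 1 := by
        rw [← hw1]
        exact (Finset.sum_eq_single_of_mem x hx (fun b hb hbx => hcase b hb hbx)).symm
      have hz' : z = w x • x := by
        rw [← hwz]
        exact Finset.sum_eq_single_of_mem x hx (fun b hb hbx => by
          rw [hcase b hb hbx, zero_smul])
      rw [hz', hwx, one_smul]
    · exfalso
      push_neg at hcase
      obtain ⟨y₀, hy₀s, hy₀x, hwy₀⟩ := hcase
      have hwy₀pos : 0 < w y₀ := lt_of_le_of_ne (hw0 y₀ hy₀s) (Ne.symm hwy₀)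
      have hfz' : f z = ∑ y ∈ s, w y * f y := by
        rw [← hwz, map_sum]
        simp
      have hlt : ∑ y ∈ s, w y * f y < ∑ y ∈ s, w y * f x := by
        refine Finset.sum_lt_sum (fun i hi => ?_) ⟨y₀, hy₀s, ?_⟩
        · rcases eq_or_ne i x with rfl | hne
          · exact le_rfl
          · exact mul_le_mul_of_nonneg_left (h i hi hne).le (hw0 i hi)
        · exact mul_lt_mul_of_pos_left (h y₀ hy₀s hy₀x) hwy₀pos
      rw [← Finset.sum_mul, hw1, one_mul] at hlt
      rw [hfz'] at hfz; linarith
  refine ⟨subset_convexHull ℝ _ hx, ?_⟩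
  intro x₁ hx₁ x₂ hx₂ hseg
  obtain ⟨a, b, ha, hb, hab, hsum⟩ := hseg
  have hf : a * f x₁ + b * f x₂ = f x := by
    rw [← hsum]; simp [smul_eq_mul]
  have h1 := hle x₁ hx₁
  have h2 := hle x₂ hx₂
  have e1 : f x₁ = f x := by
    by_contra hne
    have hlt : f x₁ < f x := lt_of_le_of_ne h1 hne
    have t1 := mul_lt_mul_of_pos_left hlt ha
    have t2 := mul_le_mul_of_nonneg_left h2 hb.le
    have t3 : a * f x + b * f x = f x := by rw [← add_mul, hab, one_mul]
    linarith
  have e2 : f x₂ = f x := by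
    by_contra hne
    have hlt : f x₂ < f x := lt_of_le_of_ne h2 hne
    have t1 := mul_lt_mul_of_pos_left hlt hb
    have t2 := mul_le_mul_of_nonneg_left h1 ha.le
    have t3 : a * f x + b * f x = f x := by rw [← add_mul, hab, one_mul]
    linarith
  exact heq x₁ hx₁ e1

lemma lap_surj (n : ℕ) (Q : Matrix (Fin (n+1)) (Fin (n+1)) ℤ)
    (hQ : IsConnectedLaplacian n Q) (y : Fin (n+1) → ℝ) (hy : ∑ i, y i = 0) :
    ∃ c : Fin (n+1) → ℝ, ∀ j, ∑ i, (Q j i : ℝ) * c i = y j := by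
  obtain ⟨⟨hsymm, hoff, hrow⟩, hconn⟩ := hQ
  set Qr : Matrix (Fin (n+1)) (Fin (n+1)) ℝ := Matrix.of fun i j => ((Q i j : ℝ)) with hQrdef
  set L := Qr.mulVecLin with hLdef
  have hL_apply : ∀ c j, L c j = ∑ i, (Q j i : ℝ) * c i := by
    intro c j
    simp [hLdef, Matrix.mulVecLin_apply, Matrix.mulVec, dotProduct, hQrdef]
  set sfun : (Fin (n+1) → ℝ) →ₗ[ℝ] ℝ :=
    ∑ i, LinearMap.proj i with hsdef
  have hs_apply : ∀ x : Fin (n+1) → ℝ, sfun x = ∑ i, x i := by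
    intro x; simp [hsdef]
  have hrowR : ∀ i, ∑ j, (Q i j : ℝ) = 0 := by
    intro i
    exact_mod_cast hrow i
  have hcol : ∀ j, ∑ i, (Q i j : ℝ) = 0 := by
    intro j
    calc ∑ i, (Q i j : ℝ) = ∑ i, (Q j i : ℝ) := by
          exact Finset.sum_congr rfl fun i _ => by rw [hsymm]
      _ = 0 := hrowR j
  -- range L ≤ ker sfun
  have hrange_le : LinearMap.range L ≤ LinearMap.ker sfun := by
    rintro _ ⟨x, rfl⟩
    rw [LinearMap.mem_ker, hs_apply]
    calc ∑ j, L x j = ∑ j, ∑ i, (Q j i : ℝ) * x i :=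
          Finset.sum_congr rfl fun j _ => hL_apply x j
      _ = ∑ i, ∑ j, (Q j i : ℝ) * x i := Finset.sum_comm
      _ = ∑ i, (∑ j, (Q j i : ℝ)) * x i := by
          exact Finset.sum_congr rfl fun i _ => (Finset.sum_mul _ _ _).symm
      _ = 0 := by
          refine Finset.sum_eq_zero fun i _ => ?_
          rw [hcol i, zero_mul]
  -- ker L = span {1}
  have hker : LinearMap.ker L = Submodule.span ℝ {(fun _ => 1 : Fin (n+1) → ℝ)} := by
    apply le_antisymm
    · intro x hx
      rw [LinearMap.mem_ker] at hx
      have hLx : ∀ j, ∑ i, (Q j i : ℝ) * x i = 0 := by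
        intro j; rw [← hL_apply x j, hx]; rfl
      -- quadratic form
      have key : ∀ i, ∑ j, (-(Q i j : ℝ)) * (x i - x j)^2 = ∑ j, -((Q i j : ℝ) * x j ^ 2) := by
        intro i
        have h1 : ∑ j, (-(Q i j : ℝ)) * (x i - x j)^2
            = (∑ j, (Q i j : ℝ)) * (-(x i^2)) + (∑ j, (Q i j : ℝ) * x j) * (2 * x i)
              + ∑ j, -((Q i j : ℝ) * x j^2) := by
          rw [Finset.sum_mul, Finset.sum_mul, ← Finset.sum_add_distrib, ← Finset.sum_add_distrib]
          exact Finset.sum_congr rfl fun j _ => by ring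
        rw [h1, hrowR i, hLx i]; ring
      have hquad : ∑ i, ∑ j, (-(Q i j : ℝ)) * (x i - x j)^2 = 0 := by
        calc ∑ i, ∑ j, (-(Q i j : ℝ)) * (x i - x j)^2
            = ∑ i, ∑ j, -((Q i j : ℝ) * x j ^ 2) := Finset.sum_congr rfl fun i _ => key i
          _ = ∑ j, ∑ i, -((Q i j : ℝ) * x j ^ 2) := Finset.sum_comm
          _ = 0 := by
              refine Finset.sum_eq_zero fun j _ => ?_
              rw [Finset.sum_neg_distrib, ← Finset.sum_mul, hcol j, zero_mul, neg_zero]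
      have hnonneg : ∀ i ∈ Finset.univ (α := Fin (n+1)), ∀ j ∈ Finset.univ (α := Fin (n+1)),
          0 ≤ (-(Q i j : ℝ)) * (x i - x j)^2 := by
        intro i _ j _
        rcases eq_or_ne i j with rfl | hne
        · simp
        · have h1 : (Q i j : ℝ) ≤ 0 := by exact_mod_cast hoff i j hne
          exact mul_nonneg (neg_nonneg.mpr h1) (sq_nonneg _)
      have hzero : ∀ i j, (-(Q i j : ℝ)) * (x i - x j)^2 = 0 := by
        intro i j
        have h1 := (Finset.sum_eq_zero_iff_of_nonneg
          (fun i _ => Finset.sum_nonneg (fun j hj => hnonneg i (Finset.mem_univ i) j hj))).mp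
          hquad i (Finset.mem_univ i)
        exact (Finset.sum_eq_zero_iff_of_nonneg
          (fun j hj => hnonneg i (Finset.mem_univ i) j hj)).mp h1 j (Finset.mem_univ j)
      have hadj : ∀ i j, Q i j ≠ 0 → x i = x j := by
        intro i j hij
        rcases eq_or_ne i j with rfl | hne
        · rfl
        have hQlt : (-(Q i j : ℝ)) > 0 := by
          have h1 : (Q i j : ℝ) ≤ 0 := by exact_mod_cast hoff i j hne
          have h2 : (Q i j : ℝ) ≠ 0 := by exact_mod_cast hij
          simp only [gt_iff_lt, neg_pos]
          exact lt_of_le_of_ne h1 h2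
        have := hzero i j
        have hsq : (x i - x j)^2 = 0 := by
          rcases mul_eq_zero.mp this with h | h
          · exact absurd h (ne_of_gt hQlt)
          · exact h
        have := pow_eq_zero_iff (n := 2) (by norm_num) |>.mp hsq
        linarith [sub_eq_zero.mp this]
      have hwalk : ∀ (i j : Fin (n+1)) (w : (SimpleGraph.fromRel fun i j => Q i j ≠ 0).Walk i j),
          x i = x j := by
        intro i j w
        induction w with
        | nil => rfl
        | @cons u v w h p ih =>
          rw [SimpleGraph.fromRel_adj] at h
          obtain ⟨hne, hor⟩ := h
          rcases hor with h' | h'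
          · exact (hadj u v h').trans ih
          · exact ((hadj v u h').symm).trans ih
      have hconst : ∀ i j : Fin (n+1), x i = x j := by
        intro i j
        obtain ⟨w⟩ := hconn.preconnected i j
        exact hwalk i j w
      rw [Submodule.mem_span_singleton]
      exact ⟨x 0, funext fun j => by simp [hconst j 0]⟩
    · rw [Submodule.span_le, Set.singleton_subset_iff]
      rw [SetLike.mem_coe, LinearMap.mem_ker]
      funext j
      rw [hL_apply]
      simpa using hrowR j
  -- surjectivity of sfun
  have hssurj : Function.Surjective sfun := by
    intro r
    refine ⟨Pi.single 0 r, ?_⟩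
    rw [hs_apply]
    simp
  have hrangerank : Module.finrank ℝ (LinearMap.range L) = n := by
    have h1 := LinearMap.finrank_range_add_finrank_ker L
    rw [hker] at h1
    have h2 : Module.finrank ℝ (Submodule.span ℝ {(fun _ => 1 : Fin (n+1) → ℝ)}) = 1 := by
      apply finrank_span_singleton
      intro h
      have := congrFun h 0
      simp at this
    rw [h2, Module.finrank_pi, Fintype.card_fin] at h1
    omega
  have hkerrank : Module.finrank ℝ (LinearMap.ker sfun) = n := by
    have h1 := LinearMap.finrank_range_add_finrank_ker sfun
    rw [LinearMap.range_eq_top.mpr hssurj, finrank_top, Module.finrank_self,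
      Module.finrank_pi, Fintype.card_fin] at h1
    omega
  have hrange_eq : LinearMap.range L = LinearMap.ker sfun := by
    apply Submodule.eq_of_le_of_finrank_le hrange_le
    rw [hrangerank, hkerrank]
  have hymem : y ∈ LinearMap.range L := by
    rw [hrange_eq, LinearMap.mem_ker, hs_apply]
    exact hy
  obtain ⟨c, hc⟩ := hymem
  exact ⟨c, fun j => by rw [← hL_apply c j, hc]⟩

theorem uS_is_vertex (n : ℕ) (hn : 1 ≤ n)
    (Q : Matrix (Fin (n+1)) (Fin (n+1)) ℤ) (hQ : IsConnectedLaplacian n Q)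
    (S : Finset (Fin (n+1))) (hS1 : S.Nonempty) (hS2 : S ≠ Finset.univ) :
    uCut n Q S ∈ Set.extremePoints ℝ (convexHull ℝ
        {x | ∃ T : Finset (Fin (n+1)), T.Nonempty ∧ x = uCut n Q T}) ∧
    ∃ f : (Fin (n+1) → ℝ) →ₗ[ℝ] ℝ, ∀ T : Finset (Fin (n+1)), T.Nonempty → T ≠ S →
        f (uCut n Q T) < f (uCut n Q S) := by
  classical
  have hk : 1 ≤ S.card := hS1.card_pos
  have hm : 1 ≤ Sᶜ.card := by
    rw [Finset.card_compl]
    have h1 : S.card < Finset.univ.card :=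
      Finset.card_lt_card (Finset.ssubset_univ_iff.mpr hS2)
    rw [Finset.card_univ, Fintype.card_fin] at h1
    rw [Fintype.card_fin]
    omega
  set k := S.card with hkdef
  set m := Sᶜ.card with hmdef
  set y : Fin (n+1) → ℝ := fun j => if j ∈ S then (m:ℝ) else -(k:ℝ) with hydef
  have hsumT : ∀ T : Finset (Fin (n+1)),
      ∑ j ∈ T, y j = ((T ∩ S).card : ℝ) * m - ((T \ S).card : ℝ) * k := by
    intro T
    rw [← Finset.sum_inter_add_sum_sdiff T S y]
    have h1 : ∑ j ∈ T ∩ S, y j = ((T ∩ S).card : ℝ) * m := by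
      calc ∑ j ∈ T ∩ S, y j = ∑ _j ∈ T ∩ S, (m:ℝ) :=
            Finset.sum_congr rfl fun j hj => by
              simp [hydef, (Finset.mem_inter.mp hj).2]
        _ = ((T ∩ S).card : ℝ) * m := by rw [Finset.sum_const, nsmul_eq_mul]
    have h2 : ∑ j ∈ T \ S, y j = -(((T \ S).card : ℝ) * k) := by
      calc ∑ j ∈ T \ S, y j = ∑ _j ∈ T \ S, (-(k:ℝ)) :=
            Finset.sum_congr rfl fun j hj => by
              simp [hydef, (Finset.mem_sdiff.mp hj).2]
        _ = -(((T \ S).card : ℝ) * k) := by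
            rw [Finset.sum_const, nsmul_eq_mul]; ring
    rw [h1, h2]; ring
  have hysum : ∑ i, y i = 0 := by
    have := hsumT Finset.univ
    rw [Finset.univ_inter, ← Finset.compl_eq_univ_sdiff] at this
    rw [this]; ring
  obtain ⟨c, hc⟩ := lap_surj n Q hQ y hysum
  set f : (Fin (n+1) → ℝ) →ₗ[ℝ] ℝ :=
    ∑ i, c i • (LinearMap.proj i : (Fin (n+1) → ℝ) →ₗ[ℝ] ℝ) with hfdef
  have hf_apply : ∀ x : Fin (n+1) → ℝ, f x = ∑ i, c i * x i := by
    intro x; simp [hfdef]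
  have hfu : ∀ T : Finset (Fin (n+1)), f (uCut n Q T) = ∑ j ∈ T, y j := by
    intro T
    rw [hf_apply]
    have h1 : ∀ i, uCut n Q T i = ∑ j ∈ T, (Q j i : ℝ) := by
      intro i; simp [uCut, rowVec, Finset.sum_apply]
    calc ∑ i, c i * uCut n Q T i = ∑ i, ∑ j ∈ T, c i * (Q j i : ℝ) := by
          refine Finset.sum_congr rfl fun i _ => ?_
          rw [h1, Finset.mul_sum]
      _ = ∑ j ∈ T, ∑ i, c i * (Q j i : ℝ) := Finset.sum_comm
      _ = ∑ j ∈ T, y j := Finset.sum_congr rfl fun j _ => by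
          rw [← hc j]
          exact Finset.sum_congr rfl fun i _ => mul_comm _ _
  have strict : ∀ T : Finset (Fin (n+1)), T.Nonempty → T ≠ S →
      f (uCut n Q T) < f (uCut n Q S) := by
    intro T _hT hTS
    rw [hfu, hfu, hsumT, hsumT, Finset.inter_self, Finset.sdiff_self]
    simp only [Finset.card_empty, Nat.cast_zero, zero_mul, sub_zero]
    set a := (T ∩ S).card with hadef
    set b := (T \ S).card with hbdef
    have hak : a ≤ k := Finset.card_le_card Finset.inter_subset_right
    have hcase : a < k ∨ 1 ≤ b := by
      by_contra hcon
      push_neg at hcon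
      obtain ⟨h1, h2⟩ := hcon
      have hb0 : b = 0 := by omega
      have ha : a = k := by omega
      have hTsub : T ⊆ S := by
        rw [← Finset.sdiff_eq_empty_iff_subset]
        exact Finset.card_eq_zero.mp hb0
      have hTT : T ∩ S = T := Finset.inter_eq_left.mpr hTsub
      have hTcard : k ≤ T.card := by rw [← ha, hadef, hTT]
      exact hTS (Finset.eq_of_subset_of_card_le hTsub hTcard)
    have hnat : a * m < k * m + b * k := by
      rcases hcase with h | h
      · have h1 : a * m < k * m := Nat.mul_lt_mul_of_lt_of_le h (le_refl m) (by omega)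
        exact lt_of_lt_of_le h1 (Nat.le_add_right _ _)
      · have h1 : a * m ≤ k * m := Nat.mul_le_mul_right _ hak
        have h2 : 0 < b * k := Nat.mul_pos (by omega) (by omega)
        omega
    have hr : (a:ℝ) * m < (k:ℝ) * m + (b:ℝ) * k := by exact_mod_cast hnat
    linarith
  refine ⟨?_, f, strict⟩
  set s : Finset (Fin (n+1) → ℝ) :=
    (Finset.univ.filter fun T : Finset (Fin (n+1)) => T.Nonempty).image (uCut n Q) with hsdef
  have hAs : {x | ∃ T : Finset (Fin (n+1)), T.Nonempty ∧ x = uCut n Q T} = ↑s := by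
    ext x
    simp only [Set.mem_setOf_eq, hsdef, Finset.coe_image, Set.mem_image, Finset.mem_coe,
      Finset.mem_filter, Finset.mem_univ, true_and]
    constructor
    · rintro ⟨T, hT, rfl⟩; exact ⟨T, hT, rfl⟩
    · rintro ⟨T, hT, rfl⟩; exact ⟨T, hT, rfl⟩
  rw [hAs]
  apply hull_extreme_of_strict_max s f (uCut n Q S)
  · exact Finset.mem_image_of_mem _ (Finset.mem_filter.mpr ⟨Finset.mem_univ _, hS1⟩)
  · intro p hp hpne
    obtain ⟨T, hTmem, rfl⟩ := Finset.mem_image.mp hp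
    have hT : T.Nonempty := (Finset.mem_filter.mp hTmem).2
    exact strict T hT (fun h => hpne (by rw [h]))
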